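/- For all integers n ≥ 2 the following inequalities hold: τ(n) ≤ 138.32·(n−1)^(1/6); τ'_1(n) ≤ 16.2·(n−1)^(1/6); τ'_2(n) ≤ 51.3·(n−1)^(1/6); τ'_3(n) ≤ 32.3·(n−1)^(1/6); and τ'_6(n) ≤ 102.7·(n−1)^(1/6). -/

import Mathlib

/-- `tau' j n` is the number of divisors `d` of `n` with `gcd(d, 6) = j`. -/
def tau' (j n : ℕ) : ℕ := (n.divisors.filter fun d => Nat.gcd d 6 = j).card


lemma aux (X Y : ℕ) (h : 531441 * X ≤ 1000000 * Y) : X ≤ 2 * Y := by linarith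

lemma step6 (e : ℕ) (h : 9 ≤ e) : (e+1)^6 ≤ 2 * e^6 := by
  have h1 : (9*(e+1))^6 ≤ (10*e)^6 := Nat.pow_le_pow_left (by omega) 6
  have h2 : 531441 * (e+1)^6 ≤ 1000000 * e^6 := by
    calc 531441 * (e+1)^6 = (9*(e+1))^6 := by ring
      _ ≤ (10*e)^6 := h1
      _ = 1000000 * e^6 := by ring
  exact aux _ _ h2

lemma primeBound (N D p : ℕ) (hp : 2 ≤ p)
    (hbase : ∀ e < 10, (e+1)^6 * D ≤ N * p^e) :
    ∀ e, (e+1)^6 * D ≤ N * p^e := by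
  intro e
  induction e with
  | zero => exact hbase 0 (by norm_num)
  | succ e ih =>
    by_cases he : e + 1 < 10
    · exact hbase _ he
    · have h9 : 9 ≤ e + 1 := by omega
      calc (e+1+1)^6 * D ≤ (2 * (e+1)^6) * D := Nat.mul_le_mul_right D (step6 (e+1) h9)
        _ = 2 * ((e+1)^6 * D) := by ring
        _ ≤ 2 * (N * p^e) := Nat.mul_le_mul_left 2 ih
        _ ≤ p * (N * p^e) := Nat.mul_le_mul_right _ hp
        _ = N * p^(e+1) := by ring

lemma primeBound' (N D p : ℕ) (hp : 2 ≤ p)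
    (hbase : ∀ e < 10, e^6 * D ≤ N * p^e) :
    ∀ e, e^6 * D ≤ N * p^e := by
  intro e
  induction e with
  | zero => exact hbase 0 (by norm_num)
  | succ e ih =>
    by_cases he : e + 1 < 10
    · exact hbase _ he
    · have h9 : 9 ≤ e := by omega
      calc (e+1)^6 * D ≤ (2 * e^6) * D := Nat.mul_le_mul_right D (step6 e h9)
        _ = 2 * (e^6 * D) := by ring
        _ ≤ 2 * (N * p^e) := Nat.mul_le_mul_left 2 ih
        _ ≤ p * (N * p^e) := Nat.mul_le_mul_right _ hp
        _ = N * p^(e+1) := by ring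

-- test decide speed for bases
example : ∀ e < 10, (e+1)^6 * 61 ≤ 64 * 61^e := by decide
example : ∀ e < 10, (e+1)^6 * 125 ≤ 4096 * 5^e := by decide
example : ∀ e < 10, e^6 * 512 ≤ 531441 * 2^e := by decide

def smalls : Finset ℕ := {5,7,11,13,17,19,23,29,31,37,41,43,47,53,59,61}

def c : ℕ → ℚ
  | 5 => 4096/125
  | 7 => 729/49
  | 11 => 729/121
  | 13 => 64/13
  | 17 => 64/17
  | 19 => 64/19
  | 23 => 64/23
  | 29 => 64/29
  | 31 => 64/31
  | 37 => 64/37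
  | 41 => 64/41
  | 43 => 64/43
  | 47 => 64/47
  | 53 => 64/53
  | 59 => 64/59
  | 61 => 64/61
  | _ => 1


lemma q_of_nat (N D p : ℕ) (hD : 0 < D) (h : ∀ e, (e+1)^6 * D ≤ N * p^e) (e : ℕ) :
    ((e:ℚ)+1)^6 ≤ (N/D : ℚ) * (p:ℚ)^e := by
  rw [div_mul_eq_mul_div, le_div_iff₀ (by exact_mod_cast hD)]
  have := h e
  push_cast
  exact_mod_cast this


lemma prodA : ∏ p ∈ smalls, c p
    = 657892092417861778672665476726784 / 37630022352809736523799125 := by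
  rw [show smalls = ({5,7,11,13,17,19,23,29,31,37,41,43,47,53,59,61} : Finset ℕ) from rfl]
  rw [show ({5,7,11,13,17,19,23,29,31,37,41,43,47,53,59,61} : Finset ℕ) = insert 5 {7,11,13,17,19,23,29,31,37,41,43,47,53,59,61} from rfl,
    Finset.prod_insert (by decide)]
  rw [show ({7,11,13,17,19,23,29,31,37,41,43,47,53,59,61} : Finset ℕ) = insert 7 {11,13,17,19,23,29,31,37,41,43,47,53,59,61} from rfl,
    Finset.prod_insert (by decide)]
  rw [show ({11,13,17,19,23,29,31,37,41,43,47,53,59,61} : Finset ℕ) = insert 11 {13,17,19,23,29,31,37,41,43,47,53,59,61} from rfl,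
    Finset.prod_insert (by decide)]
  rw [show ({13,17,19,23,29,31,37,41,43,47,53,59,61} : Finset ℕ) = insert 13 {17,19,23,29,31,37,41,43,47,53,59,61} from rfl,
    Finset.prod_insert (by decide)]
  rw [show ({17,19,23,29,31,37,41,43,47,53,59,61} : Finset ℕ) = insert 17 {19,23,29,31,37,41,43,47,53,59,61} from rfl,
    Finset.prod_insert (by decide)]
  rw [show ({19,23,29,31,37,41,43,47,53,59,61} : Finset ℕ) = insert 19 {23,29,31,37,41,43,47,53,59,61} from rfl,
    Finset.prod_insert (by decide)]
  rw [show ({23,29,31,37,41,43,47,53,59,61} : Finset ℕ) = insert 23 {29,31,37,41,43,47,53,59,61} from rfl,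
    Finset.prod_insert (by decide)]
  rw [show ({29,31,37,41,43,47,53,59,61} : Finset ℕ) = insert 29 {31,37,41,43,47,53,59,61} from rfl,
    Finset.prod_insert (by decide)]
  rw [show ({31,37,41,43,47,53,59,61} : Finset ℕ) = insert 31 {37,41,43,47,53,59,61} from rfl,
    Finset.prod_insert (by decide)]
  rw [show ({37,41,43,47,53,59,61} : Finset ℕ) = insert 37 {41,43,47,53,59,61} from rfl,
    Finset.prod_insert (by decide)]
  rw [show ({41,43,47,53,59,61} : Finset ℕ) = insert 41 {43,47,53,59,61} from rfl,
    Finset.prod_insert (by decide)]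
  rw [show ({43,47,53,59,61} : Finset ℕ) = insert 43 {47,53,59,61} from rfl,
    Finset.prod_insert (by decide)]
  rw [show ({47,53,59,61} : Finset ℕ) = insert 47 {53,59,61} from rfl,
    Finset.prod_insert (by decide)]
  rw [show ({53,59,61} : Finset ℕ) = insert 53 {59,61} from rfl,
    Finset.prod_insert (by decide)]
  rw [show ({59,61} : Finset ℕ) = insert 59 {61} from rfl,
    Finset.prod_insert (by decide)]
  rw [Finset.prod_singleton]
  norm_num [c]

lemma one_le_c (p : ℕ) : 1 ≤ c p := by
  unfold c
  split <;> norm_num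

lemma big_bound (p e : ℕ) (hp : 64 ≤ p) : (e+1)^6 ≤ p^e := by
  calc (e+1)^6 ≤ (2^e)^6 := Nat.pow_le_pow_left (Nat.lt_two_pow_self (n := e)) 6
    _ = 64^e := by rw [← pow_mul, mul_comm, pow_mul]; norm_num
    _ ≤ p^e := Nat.pow_le_pow_left hp e

lemma c_default (p : ℕ) (hp : 65 ≤ p) : c p = 1 := by
  unfold c; split <;> first | rfl | omega

lemma c_bound {p : ℕ} (hp : p.Prime) (h2 : p ≠ 2) (h3 : p ≠ 3) (e : ℕ) :
    ((e:ℚ)+1)^6 ≤ c p * (p:ℚ)^e := by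
  have hp5 : 5 ≤ p := by
    rcases Nat.lt_or_ge p 5 with h | h
    · interval_cases p <;> simp_all <;> exact absurd hp (by decide)
    · exact h
  by_cases hs : p ≤ 64
  · have hmem : p = 5 ∨ p = 7 ∨ p = 11 ∨ p = 13 ∨ p = 17 ∨ p = 19 ∨ p = 23 ∨ p = 29 ∨ p = 31 ∨ p = 37 ∨ p = 41 ∨ p = 43 ∨ p = 47 ∨ p = 53 ∨ p = 59 ∨ p = 61 := by
      interval_cases p <;> first | (left; rfl) | tauto | exact absurd hp (by decide)
    rcases hmem with hmem|hmem|hmem|hmem|hmem|hmem|hmem|hmem|hmem|hmem|hmem|hmem|hmem|hmem|hmem|hmem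
    · subst hmem
      refine le_trans (q_of_nat 4096 125 5 (by norm_num)
        (primeBound 4096 125 5 (by norm_num) (by decide)) e) (le_of_eq ?_)
      norm_num [c]
    · subst hmem
      refine le_trans (q_of_nat 729 49 7 (by norm_num)
        (primeBound 729 49 7 (by norm_num) (by decide)) e) (le_of_eq ?_)
      norm_num [c]
    · subst hmem
      refine le_trans (q_of_nat 729 121 11 (by norm_num)
        (primeBound 729 121 11 (by norm_num) (by decide)) e) (le_of_eq ?_)
      norm_num [c]
    · subst hmem
      refine le_trans (q_of_nat 64 13 13 (by norm_num)
        (primeBound 64 13 13 (by norm_num) (by decide)) e) (le_of_eq ?_)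
      norm_num [c]
    · subst hmem
      refine le_trans (q_of_nat 64 17 17 (by norm_num)
        (primeBound 64 17 17 (by norm_num) (by decide)) e) (le_of_eq ?_)
      norm_num [c]
    · subst hmem
      refine le_trans (q_of_nat 64 19 19 (by norm_num)
        (primeBound 64 19 19 (by norm_num) (by decide)) e) (le_of_eq ?_)
      norm_num [c]
    · subst hmem
      refine le_trans (q_of_nat 64 23 23 (by norm_num)
        (primeBound 64 23 23 (by norm_num) (by decide)) e) (le_of_eq ?_)
      norm_num [c]
    · subst hmem
      refine le_trans (q_of_nat 64 29 29 (by norm_num)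
        (primeBound 64 29 29 (by norm_num) (by decide)) e) (le_of_eq ?_)
      norm_num [c]
    · subst hmem
      refine le_trans (q_of_nat 64 31 31 (by norm_num)
        (primeBound 64 31 31 (by norm_num) (by decide)) e) (le_of_eq ?_)
      norm_num [c]
    · subst hmem
      refine le_trans (q_of_nat 64 37 37 (by norm_num)
        (primeBound 64 37 37 (by norm_num) (by decide)) e) (le_of_eq ?_)
      norm_num [c]
    · subst hmem
      refine le_trans (q_of_nat 64 41 41 (by norm_num)
        (primeBound 64 41 41 (by norm_num) (by decide)) e) (le_of_eq ?_)
      norm_num [c]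
    · subst hmem
      refine le_trans (q_of_nat 64 43 43 (by norm_num)
        (primeBound 64 43 43 (by norm_num) (by decide)) e) (le_of_eq ?_)
      norm_num [c]
    · subst hmem
      refine le_trans (q_of_nat 64 47 47 (by norm_num)
        (primeBound 64 47 47 (by norm_num) (by decide)) e) (le_of_eq ?_)
      norm_num [c]
    · subst hmem
      refine le_trans (q_of_nat 64 53 53 (by norm_num)
        (primeBound 64 53 53 (by norm_num) (by decide)) e) (le_of_eq ?_)
      norm_num [c]
    · subst hmem
      refine le_trans (q_of_nat 64 59 59 (by norm_num)
        (primeBound 64 59 59 (by norm_num) (by decide)) e) (le_of_eq ?_)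
      norm_num [c]
    · subst hmem
      refine le_trans (q_of_nat 64 61 61 (by norm_num)
        (primeBound 64 61 61 (by norm_num) (by decide)) e) (le_of_eq ?_)
      norm_num [c]
  · rw [c_default p (by omega), one_mul]
    have h := big_bound p e (by omega)
    calc ((e:ℚ)+1)^6 = (((e+1)^6 : ℕ) : ℚ) := by push_cast; ring
      _ ≤ (((p^e : ℕ)) : ℚ) := by exact_mod_cast h
      _ = (p:ℚ)^e := by push_cast; ring

lemma prime_ge (p : ℕ) (hp : p.Prime) (h2 : p ≠ 2) (h3 : p ≠ 3) (hns : p ∉ smalls) : 65 ≤ p := by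
  by_contra h
  push_neg at h
  have hp2 := hp.two_le
  interval_cases p <;> first | exact absurd hp (by decide) | omega | exact hns (by decide)

lemma tau_m_bound (m : ℕ) (hm : m ≠ 0) (h2 : ¬ 2 ∣ m) (h3 : ¬ 3 ∣ m) :
    ((m.divisors.card : ℚ))^6
      ≤ (657892092417861778672665476726784 / 37630022352809736523799125) * m := by
  have key : ∀ p ∈ m.primeFactors,
      ((m.factorization p : ℚ) + 1)^6 ≤ c p * (p:ℚ)^(m.factorization p) := by
    intro p hp
    have hpp := Nat.prime_of_mem_primeFactors hp
    have hpd := Nat.dvd_of_mem_primeFactors hp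
    have hp2 : p ≠ 2 := by rintro rfl; exact h2 hpd
    have hp3 : p ≠ 3 := by rintro rfl; exact h3 hpd
    exact c_bound hpp hp2 hp3 _
  calc ((m.divisors.card : ℚ))^6
      = ∏ p ∈ m.primeFactors, ((m.factorization p : ℚ) + 1)^6 := by
        rw [Nat.card_divisors hm]
        push_cast
        rw [← Finset.prod_pow]
    _ ≤ ∏ p ∈ m.primeFactors, (c p * (p:ℚ)^(m.factorization p)) := by
        apply Finset.prod_le_prod
        · intro p _; positivity
        · exact key
    _ = (∏ p ∈ m.primeFactors, c p) * ∏ p ∈ m.primeFactors, (p:ℚ)^(m.factorization p) := by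
        rw [Finset.prod_mul_distrib]
    _ = (∏ p ∈ m.primeFactors, c p) * m := by
        congr 1
        rw [show ((m:ℚ)) = ((m.factorization.prod (· ^ ·) : ℕ) : ℚ) by
          rw [Nat.factorization_prod_pow_eq_self hm]]
        rw [Finsupp.prod, Nat.support_factorization, Nat.cast_prod]
        push_cast
        rfl
    _ ≤ (657892092417861778672665476726784 / 37630022352809736523799125 : ℚ) * m := by
        apply mul_le_mul_of_nonneg_right _ (by positivity)
        rw [← prodA]
        have h1 : ∀ t : Finset ℕ, 1 ≤ ∏ p ∈ t, c p := by
          intro t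
          induction t using Finset.induction with
          | empty => simp
          | insert _ _ h ih =>
            rw [Finset.prod_insert h]
            nlinarith [one_le_c ‹ℕ›, ih]
        calc ∏ p ∈ m.primeFactors, c p
            = (∏ p ∈ m.primeFactors ∩ smalls, c p) * ∏ p ∈ m.primeFactors \ smalls, c p := by
              rw [Finset.prod_inter_mul_prod_diff]
          _ = ∏ p ∈ m.primeFactors ∩ smalls, c p := by
              rw [show ∏ p ∈ m.primeFactors \ smalls, c p = 1 from Finset.prod_eq_one ?_, mul_one]
              intro p hp
              rw [Finset.mem_sdiff] at hp
              obtain ⟨hpP, hpns⟩ := hp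
              have hpp := Nat.prime_of_mem_primeFactors hpP
              have hpd := Nat.dvd_of_mem_primeFactors hpP
              exact c_default p (prime_ge p hpp (by rintro rfl; exact h2 hpd)
                (by rintro rfl; exact h3 hpd) hpns)
          _ ≤ (∏ p ∈ m.primeFactors ∩ smalls, c p) * ∏ p ∈ smalls \ (m.primeFactors ∩ smalls), c p :=
              le_mul_of_one_le_right (le_trans zero_le_one (h1 _)) (h1 _)
          _ = ∏ p ∈ smalls, c p := by
              rw [mul_comm, Finset.prod_sdiff Finset.inter_subset_right]


def mpart (n : ℕ) : ℕ := ordCompl[3] (ordCompl[2] n)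

lemma mpart_dvd (n : ℕ) : mpart n ∣ n :=
  (Nat.ordCompl_dvd _ 3).trans (Nat.ordCompl_dvd n 2)

lemma mpart_ne_zero {n : ℕ} (hn : n ≠ 0) : mpart n ≠ 0 := by
  have h1 : 0 < ordCompl[2] n := Nat.ordCompl_pos 2 hn
  have h2 : 0 < mpart n := Nat.ordCompl_pos 3 (by omega)
  omega

lemma not_two_dvd_mpart {n : ℕ} (hn : n ≠ 0) : ¬ 2 ∣ mpart n := by
  intro h
  exact Nat.not_dvd_ordCompl Nat.prime_two hn (h.trans (Nat.ordCompl_dvd _ 3))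

lemma not_three_dvd_mpart {n : ℕ} (hn : n ≠ 0) : ¬ 3 ∣ mpart n := by
  have h1 : 0 < ordCompl[2] n := Nat.ordCompl_pos 2 hn
  exact Nat.not_dvd_ordCompl Nat.prime_three (by omega)

lemma mpart_v3 (n : ℕ) : (ordCompl[2] n).factorization 3 = n.factorization 3 := by
  rw [Nat.factorization_ordCompl n 2]
  simp [Finsupp.erase_ne]

lemma n_eq (n : ℕ) :
    n = 2 ^ n.factorization 2 * (3 ^ n.factorization 3 * mpart n) := by
  conv_lhs => rw [← Nat.ordProj_mul_ordCompl_eq_self n 2]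
  congr 1
  rw [← mpart_v3]
  exact (Nat.ordProj_mul_ordCompl_eq_self (ordCompl[2] n) 3).symm

lemma dvd_mpart {r n : ℕ} (hn : n ≠ 0) (hr : r ∣ n) (h2 : ¬ 2 ∣ r) (h3 : ¬ 3 ∣ r) :
    r ∣ mpart n := by
  have hc2 : r.Coprime 2 := ((Nat.Prime.coprime_iff_not_dvd Nat.prime_two).mpr h2).symm
  have hc3 : r.Coprime 3 := ((Nat.Prime.coprime_iff_not_dvd Nat.prime_three).mpr h3).symm
  have h := hr
  rw [n_eq n] at h
  have step1 : r ∣ 3 ^ n.factorization 3 * mpart n := by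
    rw [mul_comm] at h
    exact (Nat.Coprime.pow_right _ hc2).dvd_of_dvd_mul_right h
  rw [mul_comm] at step1
  exact (Nat.Coprime.pow_right _ hc3).dvd_of_dvd_mul_right step1

lemma count_le (n : ℕ) (hn : n ≠ 0) (S1 S2 : Finset ℕ) (P : ℕ → Prop) [DecidablePred P]
    (hP : ∀ d, d ∣ n → P d → d.factorization 2 ∈ S1 ∧ d.factorization 3 ∈ S2) :
    (n.divisors.filter P).card ≤ S1.card * (S2.card * (mpart n).divisors.card) := by
  rw [← Finset.card_product, ← Finset.card_product]
  apply Finset.card_le_card_of_injOn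
    (fun d => (d.factorization 2, d.factorization 3, mpart d))
  · intro d hd
    rw [Finset.mem_coe, Finset.mem_filter, Nat.mem_divisors] at hd
    obtain ⟨⟨hdvd, _⟩, hPd⟩ := hd
    have hd0 : d ≠ 0 := by rintro rfl; exact hn (Nat.eq_zero_of_zero_dvd hdvd)
    obtain ⟨h1, h2⟩ := hP d hdvd hPd
    refine Finset.mem_product.2 ⟨h1, Finset.mem_product.2 ⟨h2, ?_⟩⟩
    rw [Nat.mem_divisors]
    refine ⟨dvd_mpart hn ((mpart_dvd d).trans hdvd) (not_two_dvd_mpart hd0)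
      (not_three_dvd_mpart hd0), mpart_ne_zero hn⟩
  · intro d hd d' hd' heq
    rw [Finset.mem_coe, Finset.mem_filter, Nat.mem_divisors] at hd hd'
    have hd0 : d ≠ 0 := by rintro rfl; exact hn (Nat.eq_zero_of_zero_dvd hd.1.1)
    have hd0' : d' ≠ 0 := by rintro rfl; exact hn (Nat.eq_zero_of_zero_dvd hd'.1.1)
    have e1 := n_eq d
    have e2 := n_eq d'
    simp only [Prod.mk.injEq] at heq
    show d = d'
    rw [e1, e2]
    show 2 ^ d.factorization 2 * (3 ^ d.factorization 3 * mpart d) = _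
    rw [heq.1, heq.2.1, heq.2.2]


lemma tau_sq (n : ℕ) (hn : n ≠ 0) : n.divisors.card ^ 2 ≤ 4 * n := by
  set s := Nat.sqrt n with hs
  have key : n.divisors.card ≤ 2 * s := by
    have h := Finset.card_le_mul_card_image_of_maps_to
      (f := fun d => min d (n / d)) (s := n.divisors) (t := Finset.Icc 1 s) ?_ 2 ?_
    · calc n.divisors.card ≤ 2 * (Finset.Icc 1 s).card := h
        _ = 2 * s := by rw [Nat.card_Icc]; omega
    · -- maps to
      intro d hd
      rw [Nat.mem_divisors] at hd
      obtain ⟨hdvd, _⟩ := hd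
      have hd0 : 0 < d := Nat.pos_of_dvd_of_pos hdvd (Nat.pos_of_ne_zero hn)
      have hnd0 : 0 < n / d := Nat.div_pos (Nat.le_of_dvd (Nat.pos_of_ne_zero hn) hdvd) hd0
      rw [Finset.mem_Icc]
      refine ⟨le_min (by omega) (by omega), ?_⟩
      · rw [Nat.le_sqrt]
        calc min d (n/d) * min d (n/d) ≤ d * (n/d) := by
              apply Nat.mul_le_mul (min_le_left _ _) (min_le_right _ _)
          _ = n := Nat.mul_div_cancel' hdvd
    · -- fibers ≤ 2
      intro v _
      apply le_trans (Finset.card_le_card (t := ({v, n/v} : Finset ℕ)) ?_)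
      · exact Finset.card_insert_le _ _ |>.trans (by simp)
      · intro d hd
        rw [Finset.mem_filter, Nat.mem_divisors] at hd
        obtain ⟨⟨hdvd, _⟩, hmin⟩ := hd
        have hd0 : 0 < d := Nat.pos_of_dvd_of_pos hdvd (Nat.pos_of_ne_zero hn)
        have hrec : n / (n / d) = d := Nat.div_div_self hdvd hn
        have hmin' : min d (n/d) = v := hmin
        rcases min_cases d (n/d) with ⟨h1, _⟩ | ⟨h1, _⟩
        · simp only [Finset.mem_insert, Finset.mem_singleton]
          left; rw [← hmin', h1]
        · simp only [Finset.mem_insert, Finset.mem_singleton]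
          right; rw [← hmin', h1]
          exact hrec.symm
  calc n.divisors.card ^ 2 ≤ (2*s)^2 := Nat.pow_le_pow_left key 2
    _ = 4 * (s * s) := by ring
    _ ≤ 4 * n := by rw [hs]; have := Nat.sqrt_le' n; nlinarith [this]


lemma q_of_nat' (N D p : ℕ) (hD : 0 < D) (h : ∀ e, e^6 * D ≤ N * p^e) (e : ℕ) :
    ((e:ℚ))^6 ≤ (N/D : ℚ) * (p:ℚ)^e := by
  rw [div_mul_eq_mul_div, le_div_iff₀ (by exact_mod_cast hD)]
  exact_mod_cast h e

lemma powG2 (e : ℕ) : ((e:ℚ))^6 ≤ (531441/512 : ℚ) * 2^e := by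
  have := q_of_nat' 531441 512 2 (by norm_num)
    (primeBound' 531441 512 2 (by norm_num) (by decide)) e
  norm_num at this ⊢
  exact_mod_cast this

lemma powG3 (e : ℕ) : ((e:ℚ))^6 ≤ (15625/243 : ℚ) * 3^e := by
  have := q_of_nat' 15625 243 3 (by norm_num)
    (primeBound' 15625 243 3 (by norm_num) (by decide)) e
  norm_num at this ⊢
  exact_mod_cast this

lemma powF2 (e : ℕ) : ((e:ℚ)+1)^6 ≤ (531441/256 : ℚ) * 2^e := by
  have := q_of_nat 531441 256 2 (by norm_num)
    (primeBound 531441 256 2 (by norm_num) (by decide)) e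
  norm_num at this ⊢
  exact_mod_cast this

lemma powF3 (e : ℕ) : ((e:ℚ)+1)^6 ≤ (15625/81 : ℚ) * 3^e := by
  have := q_of_nat 15625 81 3 (by norm_num)
    (primeBound 15625 81 3 (by norm_num) (by decide)) e
  norm_num at this ⊢
  exact_mod_cast this

lemma to_rpow (t : ℕ) (x C : ℝ) (hx : 0 ≤ x) (hC : 0 ≤ C) (h : (t:ℝ)^6 ≤ C^6 * x) :
    (t:ℝ) ≤ C * x ^ ((1:ℝ)/6) := by
  have e1 : ((t:ℝ)^6)^((1:ℝ)/6) = t := by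
    rw [← Real.rpow_natCast (t:ℝ) 6, ← Real.rpow_mul (Nat.cast_nonneg t)]
    norm_num
  have e2 : (C^6 * x)^((1:ℝ)/6) = C * x^((1:ℝ)/6) := by
    rw [Real.mul_rpow (by positivity) hx, ← Real.rpow_natCast C 6, ← Real.rpow_mul hC]
    norm_num
  calc (t:ℝ) = ((t:ℝ)^6)^((1:ℝ)/6) := e1.symm
    _ ≤ (C^6*x)^((1:ℝ)/6) := Real.rpow_le_rpow (by positivity) h (by norm_num)
    _ = _ := e2

lemma qr_bridge (t n : ℕ) (hn : 2 ≤ n) (C : ℚ) (hC : 0 ≤ C)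
    (h : (t:ℚ)^6 ≤ C^6 * ((n:ℚ) - 1)) :
    (t:ℝ) ≤ (C:ℝ) * ((n:ℝ) - 1) ^ ((1:ℝ)/6) := by
  apply to_rpow
  · have : (2:ℝ) ≤ (n:ℝ) := by exact_mod_cast hn
    linarith
  · exact_mod_cast hC
  · have := h
    have h2 : ((t:ℚ)^6 : ℝ) ≤ ((C^6 * ((n:ℚ)-1) : ℚ) : ℝ) := by exact_mod_cast this
    push_cast at h2
    convert h2 using 2 <;> norm_num

lemma le_of_sq_le (t B k : ℕ) (h : t^2 ≤ B) (hk : B < (k+1)^2) : t ≤ k := by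
  by_contra hc
  push_neg at hc
  have : (k+1)^2 ≤ t^2 := Nat.pow_le_pow_left hc 2
  omega

lemma small_case (t n k : ℕ) (C : ℚ) (hn : 2 ≤ n) (ht : t ≤ k)
    (hC : ((k:ℚ))^6 ≤ C^6) (hC0 : 0 ≤ C) : (t:ℚ)^6 ≤ C^6 * ((n:ℚ)-1) := by
  have h1 : (1:ℚ) ≤ (n:ℚ) - 1 := by
    have : (2:ℚ) ≤ (n:ℚ) := by exact_mod_cast hn
    linarith
  have h2 : (t:ℚ)^6 ≤ (k:ℚ)^6 := by
    apply pow_le_pow_left₀ (by positivity)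
    exact_mod_cast ht
  nlinarith [pow_nonneg hC0 6]


theorem stmt_11 (n : ℕ) (hn : 2 ≤ n) :
    (n.divisors.card : ℝ) ≤ 138.32 * ((n : ℝ) - 1) ^ ((1 : ℝ) / 6) ∧
    (tau' 1 n : ℝ) ≤ 16.2 * ((n : ℝ) - 1) ^ ((1 : ℝ) / 6) ∧
    (tau' 2 n : ℝ) ≤ 51.3 * ((n : ℝ) - 1) ^ ((1 : ℝ) / 6) ∧
    (tau' 3 n : ℝ) ≤ 32.3 * ((n : ℝ) - 1) ^ ((1 : ℝ) / 6) ∧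
    (tau' 6 n : ℝ) ≤ 102.7 * ((n : ℝ) - 1) ^ ((1 : ℝ) / 6) := by
  have hn0 : n ≠ 0 := by omega
  set A : ℚ := (657892092417861778672665476726784 / 37630022352809736523799125 : ℚ) with hAdef
  set a := n.factorization 2 with ha
  set b := n.factorization 3 with hb
  have hm0 : mpart n ≠ 0 := mpart_ne_zero hn0
  have hm2 : ¬ 2 ∣ mpart n := not_two_dvd_mpart hn0
  have hm3 : ¬ 3 ∣ mpart n := not_three_dvd_mpart hn0
  set m := mpart n with hmdef
  set T := m.divisors.card with hT
  have hneq : n = 2^a * (3^b * m) := n_eq n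
  have hA : (T:ℚ)^6 ≤ A * m := tau_m_bound m hm0 hm2 hm3
  have htau2 := tau_sq n hn0
  -- general divisor facts
  have hfacts : ∀ d, d ∣ n → d ≠ 0 →
      d.factorization 2 ≤ a ∧ d.factorization 3 ≤ b := by
    intro d hdvd hd0
    have h := (Nat.factorization_le_iff_dvd hd0 hn0).mpr hdvd
    exact ⟨Finsupp.le_def.mp h 2, Finsupp.le_def.mp h 3⟩
  have hd0 : ∀ d, d ∣ n → d ≠ 0 := fun d hdvd h0 => hn0 (Nat.eq_zero_of_zero_dvd (h0 ▸ hdvd))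
  -- counting bounds
  have hcount0 : n.divisors.card ≤ (a+1) * ((b+1) * T) := by
    have h := count_le n hn0 (Finset.range (a+1)) (Finset.range (b+1)) (fun _ => True) ?_
    · simpa [Finset.filter_true, Finset.card_range] using h
    · intro d hdvd _
      obtain ⟨h2, h3⟩ := hfacts d hdvd (hd0 d hdvd)
      simp [Finset.mem_range]
      omega
  have hcount1 : tau' 1 n ≤ T := by
    have h := count_le n hn0 {0} {0} (fun d => Nat.gcd d 6 = 1) ?_
    · simpa [tau', hT, hmdef] using h
    · intro d hdvd hg
      have hgl := Nat.gcd_dvd_left d 6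
      rw [hg] at hgl
      have h2 : ¬ 2 ∣ d := by
        intro h2d
        have : (2:ℕ) ∣ Nat.gcd d 6 := Nat.dvd_gcd h2d (by norm_num)
        rw [hg] at this; omega
      have h3 : ¬ 3 ∣ d := by
        intro h3d
        have : (3:ℕ) ∣ Nat.gcd d 6 := Nat.dvd_gcd h3d (by norm_num)
        rw [hg] at this; omega
      simp [Nat.factorization_eq_zero_of_not_dvd h2, Nat.factorization_eq_zero_of_not_dvd h3]
  have hcount2 : tau' 2 n ≤ a * T := by
    have h := count_le n hn0 (Finset.Icc 1 a) {0} (fun d => Nat.gcd d 6 = 2) ?_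
    · simpa [Nat.card_Icc, tau', hT, hmdef] using h
    · intro d hdvd hg
      have hdne := hd0 d hdvd
      have hgl := Nat.gcd_dvd_left d 6
      rw [hg] at hgl
      have h3 : ¬ 3 ∣ d := by
        intro h3d
        have : (3:ℕ) ∣ Nat.gcd d 6 := Nat.dvd_gcd h3d (by norm_num)
        rw [hg] at this; omega
      have hpos := Nat.Prime.factorization_pos_of_dvd Nat.prime_two hdne hgl
      obtain ⟨h2le, _⟩ := hfacts d hdvd hdne
      simp [Finset.mem_Icc, Nat.factorization_eq_zero_of_not_dvd h3]
      omega
  have hcount3 : tau' 3 n ≤ b * T := by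
    have h := count_le n hn0 {0} (Finset.Icc 1 b) (fun d => Nat.gcd d 6 = 3) ?_
    · simpa [Nat.card_Icc, tau', hT, hmdef] using h
    · intro d hdvd hg
      have hdne := hd0 d hdvd
      have hgl := Nat.gcd_dvd_left d 6
      rw [hg] at hgl
      have h2 : ¬ 2 ∣ d := by
        intro h2d
        have : (2:ℕ) ∣ Nat.gcd d 6 := Nat.dvd_gcd h2d (by norm_num)
        rw [hg] at this; omega
      have hpos := Nat.Prime.factorization_pos_of_dvd Nat.prime_three hdne hgl
      obtain ⟨_, h3le⟩ := hfacts d hdvd hdne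
      simp [Finset.mem_Icc, Nat.factorization_eq_zero_of_not_dvd h2]
      omega
  have hcount6 : tau' 6 n ≤ a * (b * T) := by
    have h := count_le n hn0 (Finset.Icc 1 a) (Finset.Icc 1 b) (fun d => Nat.gcd d 6 = 6) ?_
    · simpa [Nat.card_Icc, tau', hT, hmdef] using h
    · intro d hdvd hg
      have hdne := hd0 d hdvd
      have hgl := Nat.gcd_dvd_left d 6
      rw [hg] at hgl
      have h2 : (2:ℕ) ∣ d := dvd_trans (by norm_num) hgl
      have h3 : (3:ℕ) ∣ d := dvd_trans (by norm_num) hgl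
      have hpos2 := Nat.Prime.factorization_pos_of_dvd Nat.prime_two hdne h2
      have hpos3 := Nat.Prime.factorization_pos_of_dvd Nat.prime_three hdne h3
      obtain ⟨h2le, h3le⟩ := hfacts d hdvd hdne
      simp [Finset.mem_Icc]
      omega
  -- basic positivity / casts
  have hnQ : (2:ℚ) ≤ (n:ℚ) := by exact_mod_cast hn
  have hnQ1 : (1:ℚ) ≤ (n:ℚ) - 1 := by linarith
  have hmn : (2^a * m : ℚ) ≤ (n:ℚ) := by
    have h3b : (1:ℚ) ≤ 3^b := one_le_pow₀ (by norm_num)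
    have hcast : (n:ℚ) = 2^a * (3^b * m) := by exact_mod_cast congrArg (Nat.cast : ℕ → ℚ) hneq
    have hm0' : (0:ℚ) ≤ m := by positivity
    have h2a : (0:ℚ) < 2^a := by positivity
    nlinarith
  have h3mn : (3^b * m : ℚ) ≤ (n:ℚ) := by
    have h2a : (1:ℚ) ≤ 2^a := one_le_pow₀ (by norm_num)
    have hcast : (n:ℚ) = 2^a * (3^b * m) := by exact_mod_cast congrArg (Nat.cast : ℕ → ℚ) hneq
    have hm0' : (0:ℚ) ≤ (3^b * m : ℚ) := by positivity
    nlinarith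
  have hnn : ((2^a * (3^b * m)) : ℚ) = (n:ℚ) := by
    exact_mod_cast (congrArg (Nat.cast : ℕ → ℚ) hneq).symm
  have hTnn : (0:ℚ) ≤ (T:ℚ) := Nat.cast_nonneg _
  have hAval : (0:ℚ) ≤ A := by rw [hAdef]; norm_num
  have hts : ∀ j, tau' j n ≤ n.divisors.card := fun j => Finset.card_filter_le _ _
  have hsq : ∀ j, (tau' j n)^2 ≤ 4*n := fun j =>
    le_trans (Nat.pow_le_pow_left (hts j) 2) htau2
  have hmQ : (m:ℚ) ≤ (n:ℚ) := by
    have : m ≤ n := Nat.le_of_dvd (by omega) (mpart_dvd n)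
    exact_mod_cast this
  refine ⟨?_, ?_, ?_, ?_, ?_⟩
  · -- total tau
    rw [show (138.32:ℝ) = ((3458/25 : ℚ) : ℝ) by norm_num]
    apply qr_bridge _ _ hn _ (by norm_num)
    rcases le_or_gt 3112 n with hbig | hsmall
    · have h1 : (n.divisors.card:ℚ) ≤ ((a:ℚ)+1) * (((b:ℚ)+1) * (T:ℚ)) := by
        exact_mod_cast hcount0
      have h6 : (n.divisors.card:ℚ)^6 ≤ ((a:ℚ)+1)^6 * ((((b:ℚ)+1))^6 * (T:ℚ)^6) := by
        calc (n.divisors.card:ℚ)^6 ≤ (((a:ℚ)+1) * (((b:ℚ)+1) * (T:ℚ)))^6 :=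
              pow_le_pow_left₀ (Nat.cast_nonneg _) h1 6
          _ = _ := by ring
      have s1 : ((a:ℚ)+1)^6 * ((((b:ℚ)+1))^6 * (T:ℚ)^6)
          ≤ (531441/256 * 2^a) * ((15625/81 * 3^b) * (A * m)) := by
        apply mul_le_mul (powF2 a) ?_ (mul_nonneg (by positivity) (pow_nonneg hTnn 6)) (by positivity)
        apply mul_le_mul (powF3 b) hA (pow_nonneg hTnn 6) ?_
        exact mul_nonneg (by positivity) (by positivity)
      have s2 : (531441/256 * 2^a) * ((15625/81 * 3^b) * (A * m))
          = (531441/256 * (15625/81 * A)) * ((2:ℚ)^a * ((3:ℚ)^b * (m:ℚ))) := by ring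
      have hbigQ : (3112:ℚ) ≤ (n:ℚ) := by exact_mod_cast hbig
      calc (n.divisors.card:ℚ)^6 ≤ (531441/256 * (15625/81 * A)) * ((2:ℚ)^a * ((3:ℚ)^b * (m:ℚ))) := by
            rw [← s2]; exact le_trans h6 s1
        _ = (531441/256 * (15625/81 * A)) * (n:ℚ) := by rw [hnn]
        _ ≤ (3458/25:ℚ)^6 * ((n:ℚ)-1) := by rw [hAdef]; norm_num; linarith
    · have ht : n.divisors.card ≤ 138 := le_of_sq_le _ (4*n) 138 htau2 (by omega)
      exact small_case _ n 138 _ hn ht (by norm_num) (by norm_num)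
  · -- tau' 1
    rw [show (16.2:ℝ) = ((81/5 : ℚ) : ℝ) by norm_num]
    apply qr_bridge _ _ hn _ (by norm_num)
    rcases le_or_gt 31 n with hbig | hsmall
    · have h1 : (tau' 1 n : ℚ) ≤ (T:ℚ) := by exact_mod_cast hcount1
      have hbigQ : (31:ℚ) ≤ (n:ℚ) := by exact_mod_cast hbig
      calc (tau' 1 n : ℚ)^6 ≤ (T:ℚ)^6 := pow_le_pow_left₀ (Nat.cast_nonneg _) h1 6
        _ ≤ A * m := hA
        _ ≤ A * n := by
            apply mul_le_mul_of_nonneg_left hmQ hAval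
        _ ≤ (81/5:ℚ)^6 * ((n:ℚ)-1) := by rw [hAdef]; norm_num; linarith
    · have ht : tau' 1 n ≤ 16 := le_of_sq_le _ (4*n) 16 (hsq 1) (by omega)
      exact small_case _ n 16 _ hn ht (by norm_num) (by norm_num)
  · -- tau' 2
    rw [show (51.3:ℝ) = ((513/10 : ℚ) : ℝ) by norm_num]
    apply qr_bridge _ _ hn _ (by norm_num)
    rcases le_or_gt 230 n with hbig | hsmall
    · have h1 : (tau' 2 n : ℚ) ≤ (a:ℚ) * (T:ℚ) := by exact_mod_cast hcount2
      have hbigQ : (230:ℚ) ≤ (n:ℚ) := by exact_mod_cast hbig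
      have h6 : (tau' 2 n : ℚ)^6 ≤ (a:ℚ)^6 * (T:ℚ)^6 := by
        calc (tau' 2 n : ℚ)^6 ≤ ((a:ℚ) * (T:ℚ))^6 := pow_le_pow_left₀ (Nat.cast_nonneg _) h1 6
          _ = _ := by ring
      have s1 : (a:ℚ)^6 * (T:ℚ)^6 ≤ (531441/512 * 2^a) * (A * m) := by
        apply mul_le_mul (powG2 a) hA (pow_nonneg hTnn 6) (by positivity)
      calc (tau' 2 n : ℚ)^6 ≤ (531441/512 * 2^a) * (A * m) := le_trans h6 s1
        _ = (531441/512 * A) * ((2:ℚ)^a * (m:ℚ)) := by ring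
        _ ≤ (531441/512 * A) * (n:ℚ) := by
            apply mul_le_mul_of_nonneg_left hmn
            exact mul_nonneg (by positivity) hAval
        _ ≤ (513/10:ℚ)^6 * ((n:ℚ)-1) := by rw [hAdef]; norm_num; linarith
    · have ht : tau' 2 n ≤ 51 := le_of_sq_le _ (4*n) 51 (hsq 2) (by omega)
      exact small_case _ n 51 _ hn ht (by norm_num) (by norm_num)
  · -- tau' 3
    rw [show (32.3:ℝ) = ((323/10 : ℚ) : ℝ) by norm_num]
    apply qr_bridge _ _ hn _ (by norm_num)
    rcases le_or_gt 100 n with hbig | hsmall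
    · have h1 : (tau' 3 n : ℚ) ≤ (b:ℚ) * (T:ℚ) := by exact_mod_cast hcount3
      have hbigQ : (100:ℚ) ≤ (n:ℚ) := by exact_mod_cast hbig
      have h6 : (tau' 3 n : ℚ)^6 ≤ (b:ℚ)^6 * (T:ℚ)^6 := by
        calc (tau' 3 n : ℚ)^6 ≤ ((b:ℚ) * (T:ℚ))^6 := pow_le_pow_left₀ (Nat.cast_nonneg _) h1 6
          _ = _ := by ring
      have s1 : (b:ℚ)^6 * (T:ℚ)^6 ≤ (15625/243 * 3^b) * (A * m) := by
        apply mul_le_mul (powG3 b) hA (pow_nonneg hTnn 6) (by positivity)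
      calc (tau' 3 n : ℚ)^6 ≤ (15625/243 * 3^b) * (A * m) := le_trans h6 s1
        _ = (15625/243 * A) * ((3:ℚ)^b * (m:ℚ)) := by ring
        _ ≤ (15625/243 * A) * (n:ℚ) := by
            apply mul_le_mul_of_nonneg_left h3mn
            exact mul_nonneg (by positivity) hAval
        _ ≤ (323/10:ℚ)^6 * ((n:ℚ)-1) := by rw [hAdef]; norm_num; linarith
    · have ht : tau' 3 n ≤ 32 := le_of_sq_le _ (4*n) 32 (hsq 3) (by omega)
      exact small_case _ n 32 _ hn ht (by norm_num) (by norm_num)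
  · -- tau' 6
    rw [show (102.7:ℝ) = ((1027/10 : ℚ) : ℝ) by norm_num]
    apply qr_bridge _ _ hn _ (by norm_num)
    rcases le_or_gt 182 n with hbig | hsmall
    · have h1 : (tau' 6 n : ℚ) ≤ (a:ℚ) * ((b:ℚ) * (T:ℚ)) := by exact_mod_cast hcount6
      have hbigQ : (182:ℚ) ≤ (n:ℚ) := by exact_mod_cast hbig
      have h6 : (tau' 6 n : ℚ)^6 ≤ (a:ℚ)^6 * ((b:ℚ)^6 * (T:ℚ)^6) := by
        calc (tau' 6 n : ℚ)^6 ≤ ((a:ℚ) * ((b:ℚ) * (T:ℚ)))^6 := pow_le_pow_left₀ (Nat.cast_nonneg _) h1 6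
          _ = _ := by ring
      have s1 : (a:ℚ)^6 * ((b:ℚ)^6 * (T:ℚ)^6)
          ≤ (531441/512 * 2^a) * ((15625/243 * 3^b) * (A * m)) := by
        apply mul_le_mul (powG2 a) ?_ (mul_nonneg (by positivity) (pow_nonneg hTnn 6)) (by positivity)
        apply mul_le_mul (powG3 b) hA (pow_nonneg hTnn 6) ?_
        exact mul_nonneg (by positivity) (by positivity)
      calc (tau' 6 n : ℚ)^6 ≤ (531441/512 * 2^a) * ((15625/243 * 3^b) * (A * m)) := le_trans h6 s1
        _ = (531441/512 * (15625/243 * A)) * ((2:ℚ)^a * ((3:ℚ)^b * (m:ℚ))) := by ring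
        _ = (531441/512 * (15625/243 * A)) * (n:ℚ) := by rw [hnn]
        _ ≤ (1027/10:ℚ)^6 * ((n:ℚ)-1) := by rw [hAdef]; norm_num; linarith
    · have ht : tau' 6 n ≤ 102 := le_of_sq_le _ (4*n) 102 (hsq 6) (by omega)
      exact small_case _ n 102 _ hn ht (by norm_num) (by norm_num)
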